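/- With x₁* = (-r, 0, …, 0), x₂* = (r, 0, …, 0), parameters σ₁, σ₂, L > 0, γ₁ = L²/σ₁², β = σ₂/σ₁, and λ₁ = ((1+β)/(1+2β))·γ₁/(2r) - r/(1+2β): for any point x on the sphere ∂B(x₁*, L/σ₁) lying in B̄(x₁*, L/σ₁) ∩ B̄(x₂*, L/σ₂) \ {x₁*, x₂*}, the strict inequality φ̃₁(x) + φ̃₂(x) < ψ(x) holds if and only if the first coordinate x₁ < λ₁, and φ̃₁(x) + φ̃₂(x) > ψ(x) holds if and only if x₁ > λ₁. -/

import Mathlib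

open scoped RealInnerProductSpace


set_option maxHeartbeats 1000000 in
/-- With `x₁* = (-r,0,…,0)`, `x₂* = (r,0,…,0)`, `γ₁ = L²/σ₁²`, `β = σ₂/σ₁`,
`λ₁ = ((1+β)/(1+2β))·γ₁/(2r) - r/(1+2β)`: for any point `x` on the sphere
`∂B(x₁*, L/σ₁)` lying in `B̄(x₁*, L/σ₁) ∩ B̄(x₂*, L/σ₂) \ {x₁*, x₂*}`, the strict
inequality `φ̃₁(x) + φ̃₂(x) < ψ(x)` holds iff the first coordinate `x₁ < λ₁`, and
`φ̃₁(x) + φ̃₂(x) > ψ(x)` holds iff `x₁ > λ₁`. -/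
theorem stmt_9 {n : ℕ} (r σ₁ σ₂ L : ℝ) (hr : 0 < r) (h1 : 0 < σ₁) (h2 : 0 < σ₂) (hL : 0 < L)
    (x₁s x₂s : EuclideanSpace ℝ (Fin (n + 1)))
    (hx1 : x₁s = EuclideanSpace.single 0 (-r)) (hx2 : x₂s = EuclideanSpace.single 0 r)
    (x : EuclideanSpace ℝ (Fin (n + 1)))
    (hsph : ‖x - x₁s‖ = L / σ₁) (hb2 : ‖x - x₂s‖ ≤ L / σ₂)
    (hne1 : x ≠ x₁s) (hne2 : x ≠ x₂s) :
    (Real.arccos (σ₁ / L * ‖x - x₁s‖) + Real.arccos (σ₂ / L * ‖x - x₂s‖) <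
        Real.pi - (InnerProductGeometry.angle (x - x₂s) (x₂s - x₁s) -
          InnerProductGeometry.angle (x - x₁s) (x₂s - x₁s)) ↔
      x 0 < ((1 + σ₂ / σ₁) / (1 + 2 * (σ₂ / σ₁))) * (L ^ 2 / σ₁ ^ 2 / (2 * r)) -
        r / (1 + 2 * (σ₂ / σ₁))) ∧
    (Real.pi - (InnerProductGeometry.angle (x - x₂s) (x₂s - x₁s) -
          InnerProductGeometry.angle (x - x₁s) (x₂s - x₁s)) <
        Real.arccos (σ₁ / L * ‖x - x₁s‖) + Real.arccos (σ₂ / L * ‖x - x₂s‖) ↔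
      ((1 + σ₂ / σ₁) / (1 + 2 * (σ₂ / σ₁))) * (L ^ 2 / σ₁ ^ 2 / (2 * r)) -
        r / (1 + 2 * (σ₂ / σ₁)) < x 0) := by
  have hu : x - x₁s ≠ 0 := sub_ne_zero.mpr hne1
  have hv : x - x₂s ≠ 0 := sub_ne_zero.mpr hne2
  have hd1 : ‖x - x₁s‖ = L / σ₁ := hsph
  have hd1pos : (0:ℝ) < L / σ₁ := div_pos hL h1
  have hd2pos : (0:ℝ) < ‖x - x₂s‖ := norm_pos_iff.mpr hv
  -- first arccos is 0
  have h10 : Real.arccos (σ₁ / L * ‖x - x₁s‖) = 0 := by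
    rw [hd1]
    have : σ₁ / L * (L / σ₁) = 1 := by field_simp
    rw [this, Real.arccos_one]
  -- triangle angle sum
  have htri := InnerProductGeometry.angle_add_angle_sub_add_angle_sub_eq_pi (x - x₁s) hv
  have he1 : x - x₁s - (x - x₂s) = x₂s - x₁s := by abel
  have he2 : x - x₂s - (x - x₁s) = -(x₂s - x₁s) := by abel
  rw [he1, he2, InnerProductGeometry.angle_neg_right] at htri
  set θ := InnerProductGeometry.angle (x - x₁s) (x - x₂s) with hθ
  set α₁ := InnerProductGeometry.angle (x - x₁s) (x₂s - x₁s) with hα₁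
  set α₂ := InnerProductGeometry.angle (x - x₂s) (x₂s - x₁s) with hα₂
  have hpsi : Real.pi - (α₂ - α₁) = Real.pi - θ := by linarith
  -- cos θ
  have hcosθ : Real.cos θ = ⟪x - x₁s, x - x₂s⟫ / ((L / σ₁) * ‖x - x₂s‖) := by
    rw [hθ, InnerProductGeometry.cos_angle, hd1]
  -- inner product computations
  have hNx1 : ⟪x, x₁s⟫ = -r * x 0 := by
    rw [hx1, real_inner_comm, EuclideanSpace.inner_single_left]
    simp
  have hNx2 : ⟪x, x₂s⟫ = r * x 0 := by
    rw [hx2, real_inner_comm, EuclideanSpace.inner_single_left]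
    simp
  have hn1 : ‖x₁s‖ = r := by
    rw [hx1, EuclideanSpace.norm_single, Real.norm_eq_abs, abs_neg, abs_of_pos hr]
  have hn2 : ‖x₂s‖ = r := by
    rw [hx2, EuclideanSpace.norm_single, Real.norm_eq_abs, abs_of_pos hr]
  have hNx12 : ⟪x₁s, x₂s⟫ = -(r * r) := by
    rw [hx1, hx2, EuclideanSpace.inner_single_left]
    simp
  have hip : ⟪x - x₁s, x - x₂s⟫ = ‖x‖ ^ 2 - r ^ 2 := by
    rw [inner_sub_left, inner_sub_right, inner_sub_right, real_inner_self_eq_norm_sq,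
      hNx2, real_inner_comm x x₁s, hNx1, hNx12]
    ring
  have hd1sq : (L / σ₁) ^ 2 = ‖x‖ ^ 2 + 2 * r * x 0 + r ^ 2 := by
    rw [← hd1, norm_sub_sq_real, hNx1, hn1]; ring
  have hd2sq : ‖x - x₂s‖ ^ 2 = ‖x‖ ^ 2 - 2 * r * x 0 + r ^ 2 := by
    rw [norm_sub_sq_real, hNx2, hn2]; ring
  -- bounds for arccos
  set t := σ₂ / L * ‖x - x₂s‖ with ht
  have ht0 : 0 ≤ t := mul_nonneg (le_of_lt (div_pos h2 hL)) (norm_nonneg _)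
  have ht1 : t ≤ 1 := by
    have := mul_le_mul_of_nonneg_left hb2 (le_of_lt (div_pos h2 hL))
    calc t ≤ σ₂ / L * (L / σ₂) := this
      _ = 1 := by field_simp
  set c := -Real.cos θ with hc
  have hc1 : -1 ≤ c ∧ c ≤ 1 := by
    constructor
    · simp [hc, Real.cos_le_one θ]
    · simp [hc]; linarith [Real.neg_one_le_cos θ]
  -- ψ = arccos c
  have hθmem : 0 ≤ θ ∧ θ ≤ Real.pi :=
    ⟨InnerProductGeometry.angle_nonneg _ _, InnerProductGeometry.angle_le_pi _ _⟩
  have hpsiarc : Real.pi - θ = Real.arccos c := by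
    rw [hc, ← Real.cos_pi_sub, Real.arccos_cos (by linarith [hθmem.2]) (by linarith [hθmem.1])]
  -- the comparison lemma
  have hmono := Real.strictAntiOn_arccos
  have htmem : t ∈ Set.Icc (-1:ℝ) 1 := ⟨by linarith, ht1⟩
  have hcmem : c ∈ Set.Icc (-1:ℝ) 1 := ⟨hc1.1, hc1.2⟩
  have hcomp1 : Real.arccos t < Real.arccos c ↔ c < t := by
    constructor
    · intro h
      rcases lt_trichotomy c t with h' | h' | h'
      · exact h'
      · exact absurd h (by rw [h']; exact lt_irrefl _)
      · exact absurd (hmono htmem hcmem h') (not_lt.mpr h.le)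
    · intro h; exact hmono hcmem htmem h
  have hcomp2 : Real.arccos c < Real.arccos t ↔ t < c := by
    constructor
    · intro h
      rcases lt_trichotomy t c with h' | h' | h'
      · exact h'
      · exact absurd h (by rw [h']; exact lt_irrefl _)
      · exact absurd (hmono hcmem htmem h') (not_lt.mpr h.le)
    · intro h; exact hmono htmem hcmem h
  -- algebraic equivalence
  have hβ : (0:ℝ) < 1 + 2 * (σ₂ / σ₁) := by positivity
  have hcval : c = (r ^ 2 - ‖x‖ ^ 2) / ((L / σ₁) * ‖x - x₂s‖) := by
    rw [hc, hcosθ, hip, ← neg_div]; ring_nf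
  have hprod : (0:ℝ) < (L / σ₁) * ‖x - x₂s‖ := mul_pos hd1pos hd2pos
  have hbeta : σ₂ / L * ‖x - x₂s‖ * ((L / σ₁) * ‖x - x₂s‖) = (σ₂ / σ₁) * ‖x - x₂s‖ ^ 2 := by
    field_simp
  have hlam : ((1 + σ₂ / σ₁) / (1 + 2 * (σ₂ / σ₁))) * (L ^ 2 / σ₁ ^ 2 / (2 * r)) -
      r / (1 + 2 * (σ₂ / σ₁)) =
      ((1 + σ₂ / σ₁) * (L / σ₁) ^ 2 - 2 * r ^ 2) / (2 * r * (1 + 2 * (σ₂ / σ₁))) := by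
    field_simp
  have hkey1 : c < t ↔ x 0 < ((1 + σ₂ / σ₁) / (1 + 2 * (σ₂ / σ₁))) *
      (L ^ 2 / σ₁ ^ 2 / (2 * r)) - r / (1 + 2 * (σ₂ / σ₁)) := by
    rw [hcval, ht, div_lt_iff₀ hprod, hbeta, hd2sq, hlam, lt_div_iff₀ (by positivity)]
    have hb2' : (0:ℝ) < σ₂ / σ₁ := div_pos h2 h1
    rw [hd1sq]
    constructor
    · intro h; linarith
    · intro h; linarith
  have hkey2 : t < c ↔ ((1 + σ₂ / σ₁) / (1 + 2 * (σ₂ / σ₁))) *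
      (L ^ 2 / σ₁ ^ 2 / (2 * r)) - r / (1 + 2 * (σ₂ / σ₁)) < x 0 := by
    rw [hcval, ht, lt_div_iff₀ hprod, hbeta, hd2sq, hlam, div_lt_iff₀ (by positivity)]
    have hb2' : (0:ℝ) < σ₂ / σ₁ := div_pos h2 h1
    rw [hd1sq]
    constructor
    · intro h; linarith
    · intro h; linarith
  constructor
  · rw [h10, zero_add, hpsi, hpsiarc]
    exact hcomp1.trans hkey1
  · rw [h10, zero_add, hpsi, hpsiarc]
    exact hcomp2.trans hkey2
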